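/- Let U ⊆ ℝ^m and u an interior point of U. A function f : U → ℝ is strongly differentiable at u if and only if f is strongly partially differentiable at u with respect to each of its m variables. -/

import Mathlib

open Set Metric

/-- `f` is strongly (strictly) differentiable at `u`, an interior point of `s`,
with derivative `A`. -/
def HasStrongDerivAt {m : ℕ} (f : (Fin m → ℝ) → ℝ)
    (A : (Fin m → ℝ) →L[ℝ] ℝ) (s : Set (Fin m → ℝ)) (u : Fin m → ℝ) : Prop :=
  ∀ ε > (0 : ℝ), ∃ δ > (0 : ℝ), ball u δ ⊆ s ∧
    ∀ x ∈ ball u δ, ∀ y ∈ ball u δ, ‖f x - f y - A (x - y)‖ ≤ ε * ‖x - y‖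

/-- `f` is strongly partially differentiable with respect to the `j`-th variable at `u`,
an interior point of `s`, with value `D`. -/
def HasStrongPartialDerivAt {m : ℕ} (f : (Fin m → ℝ) → ℝ) (D : ℝ) (j : Fin m)
    (s : Set (Fin m → ℝ)) (u : Fin m → ℝ) : Prop :=
  ∀ ε > (0 : ℝ), ∃ δ > (0 : ℝ), ball u δ ⊆ s ∧
    ∀ x ∈ ball u δ, ∀ y ∈ ball u δ, x j ≠ y j → (∀ i, i ≠ j → x i = y i) →
      |(f x - f y) / (x j - y j) - D| < ε

lemma exists_pos_le_forall {ι : Type*} [Fintype ι] (d : ι → ℝ) (h : ∀ i, 0 < d i) :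
    ∃ δ > (0:ℝ), ∀ i, δ ≤ d i := by
  cases isEmpty_or_nonempty ι with
  | inl he => exact ⟨1, one_pos, fun i => isEmptyElim i⟩
  | inr hn =>
    refine ⟨Finset.univ.inf' Finset.univ_nonempty d, ?_,
      fun i => Finset.inf'_le _ (Finset.mem_univ i)⟩
    exact (Finset.lt_inf'_iff _).2 fun i _ => h i

/-- A real-valued function is strongly differentiable at an interior point `u` if and only
if it is strongly partially differentiable at `u` with respect to each of its variables. -/
theorem strongDeriv_iff_strongPartialDeriv {m : ℕ} (U : Set (Fin m → ℝ)) (u : Fin m → ℝ)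
    (hu : u ∈ interior U) (f : (Fin m → ℝ) → ℝ) :
    (∃ A : (Fin m → ℝ) →L[ℝ] ℝ, HasStrongDerivAt f A U u) ↔
      ∀ j : Fin m, ∃ D : ℝ, HasStrongPartialDerivAt f D j U u := by
  constructor
  · rintro ⟨A, hA⟩ j
    refine ⟨A (Pi.single j 1), ?_⟩
    intro ε hε
    obtain ⟨δ, hδ, hsub, hest⟩ := hA (ε/2) (by positivity)
    refine ⟨δ, hδ, hsub, ?_⟩
    intro x hx y hy hxy hco
    have hc : x j - y j ≠ 0 := sub_ne_zero.2 hxy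
    have hxysub : x - y = (x j - y j) • (Pi.single j 1 : Fin m → ℝ) := by
      funext i
      by_cases hij : i = j
      · subst hij; simp
      · simp [Pi.single_apply, hij, hco i hij]
    have hAxy : A (x - y) = (x j - y j) * A (Pi.single j 1) := by
      rw [hxysub, map_smul]; simp
    have hnorm : ‖x - y‖ ≤ |x j - y j| := by
      refine (pi_norm_le_iff_of_nonneg (abs_nonneg _)).2 fun i => ?_
      by_cases hij : i = j
      · subst hij; simp [Real.norm_eq_abs]
      · simp [Pi.sub_apply, hco i hij, Real.norm_eq_abs, abs_nonneg]
    have h1 := hest x hx y hy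
    rw [hAxy] at h1
    have key : (f x - f y) / (x j - y j) - A (Pi.single j 1)
        = (f x - f y - (x j - y j) * A (Pi.single j 1)) / (x j - y j) := by
      field_simp
    rw [key, abs_div]
    rw [div_lt_iff₀ (abs_pos.2 hc)]
    have h2 : |f x - f y - (x j - y j) * (A (Pi.single j 1))| ≤ ε/2 * |x j - y j| := by
      calc |f x - f y - (x j - y j) * (A (Pi.single j 1))| ≤ ε/2 * ‖x - y‖ := h1
        _ ≤ ε/2 * |x j - y j| := by
            apply mul_le_mul_of_nonneg_left hnorm (by positivity)
    calc |f x - f y - (x j - y j) * (A (Pi.single j 1))| ≤ ε/2 * |x j - y j| := h2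
      _ < ε * |x j - y j| := by
          apply mul_lt_mul_of_pos_right (by linarith) (abs_pos.2 hc)
  · intro h
    choose D hD using h
    refine ⟨∑ j, D j • ContinuousLinearMap.proj j, ?_⟩
    intro ε hε
    have hε' : (0:ℝ) < ε / (m + 1) := by positivity
    choose δj hδj hsubj hestj using fun j => hD j (ε / (m+1)) hε'
    obtain ⟨δ₀, hδ₀, hsub₀⟩ := Metric.mem_nhds_iff.1 (mem_interior_iff_mem_nhds.1 hu)
    obtain ⟨δ₁, hδ₁, hle⟩ := exists_pos_le_forall δj hδj
    have hδpos : (0:ℝ) < min δ₀ δ₁ := lt_min hδ₀ hδ₁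
    refine ⟨min δ₀ δ₁, hδpos, (ball_subset_ball (min_le_left _ _)).trans hsub₀, ?_⟩
    intro x hx y hy
    have hballj : ∀ j : Fin m, ball u (min δ₀ δ₁) ⊆ ball u (δj j) :=
      fun j => ball_subset_ball ((min_le_right _ _).trans (hle j))
    -- intermediate points
    set z : ℕ → (Fin m → ℝ) := fun k i => if (i : ℕ) < k then x i else y i with hzdef
    have hz0 : z 0 = y := by funext i; simp [hzdef]
    have hzm : z m = x := by funext i; simp [hzdef, i.isLt]
    have hzball : ∀ k, z k ∈ ball u (min δ₀ δ₁) := by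
      intro k
      rw [mem_ball, dist_pi_lt_iff hδpos]
      intro i
      by_cases hik : (i : ℕ) < k
      · simpa [hzdef, hik] using ((dist_pi_lt_iff hδpos).1 (mem_ball.1 hx)) i
      · simpa [hzdef, hik] using ((dist_pi_lt_iff hδpos).1 (mem_ball.1 hy)) i
    set P : ℕ → ℝ := fun k => if h : k < m then D ⟨k, h⟩ * (x ⟨k, h⟩ - y ⟨k, h⟩) else 0
      with hPdef
    have hAeq : (∑ j, D j • ContinuousLinearMap.proj (R := ℝ) (φ := fun _ : Fin m => ℝ) j)
        (x - y) = ∑ k ∈ Finset.range m, P k := by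
      rw [← Fin.sum_univ_eq_sum_range P m]
      simp [hPdef, ContinuousLinearMap.proj_apply, Fin.is_lt]
    have hfxy : f x - f y = ∑ k ∈ Finset.range m, (f (z (k+1)) - f (z k)) := by
      rw [Finset.sum_range_sub (fun k => f (z k)), hz0, hzm]
    have hterm : ∀ k ∈ Finset.range m,
        |f (z (k+1)) - f (z k) - P k| ≤ ε / (m+1) * ‖x - y‖ := by
      intro k hk
      have hkm : k < m := Finset.mem_range.1 hk
      set j : Fin m := ⟨k, hkm⟩ with hjdef
      have hPk : P k = D j * (x j - y j) := by simp [hPdef, hkm, hjdef]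
      have hzsucc_j : z (k+1) j = x j := by simp [hzdef, hjdef]
      have hz_j : z k j = y j := by simp [hzdef, hjdef]
      have hco : ∀ i, i ≠ j → z (k+1) i = z k i := by
        intro i hij
        have : (i : ℕ) ≠ k := by
          intro hik; apply hij; exact Fin.ext hik
        simp only [hzdef]
        rcases lt_or_ge (i : ℕ) k with h1 | h1
        · simp [h1, Nat.lt_succ_of_lt h1]
        · have h2 : ¬ (i:ℕ) < k := not_lt.2 h1
          have h3 : ¬ (i:ℕ) < k + 1 := by omega
          simp [h2, h3]
      by_cases hxy : x j = y j
      · have hzeq : z (k+1) = z k := by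
          funext i
          by_cases hij : i = j
          · subst hij; rw [hzsucc_j, hz_j, hxy]
          · exact hco i hij
        rw [hzeq, hPk, hxy]
        simp
        positivity
      · have hne : z (k+1) j ≠ z k j := by rw [hzsucc_j, hz_j]; exact hxy
        have hest := hestj j (z (k+1)) (hballj j (hzball (k+1))) (z k)
          (hballj j (hzball k)) hne hco
        rw [hzsucc_j, hz_j] at hest
        have hc : x j - y j ≠ 0 := sub_ne_zero.2 hxy
        have h1 : |f (z (k+1)) - f (z k) - D j * (x j - y j)| ≤ ε/(m+1) * |x j - y j| := by
          have := (div_lt_iff₀ (abs_pos.2 hc)).1 (by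
            rw [← abs_div]
            have key : (f (z (k+1)) - f (z k)) / (x j - y j) - D j
                = (f (z (k+1)) - f (z k) - D j * (x j - y j)) / (x j - y j) := by
              field_simp
            rw [← key]; exact hest)
          linarith [this]
        have h2 : |x j - y j| ≤ ‖x - y‖ := by
          have := norm_le_pi_norm (x - y) j
          simpa [Real.norm_eq_abs] using this
        rw [hPk]
        calc |f (z (k+1)) - f (z k) - D j * (x j - y j)| ≤ ε/(m+1) * |x j - y j| := h1
          _ ≤ ε/(m+1) * ‖x - y‖ := by
              apply mul_le_mul_of_nonneg_left h2 (le_of_lt hε')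
    calc ‖f x - f y - (∑ j, D j • ContinuousLinearMap.proj j) (x - y)‖
        = |∑ k ∈ Finset.range m, (f (z (k+1)) - f (z k) - P k)| := by
          rw [hAeq, hfxy, ← Finset.sum_sub_distrib, Real.norm_eq_abs]
      _ ≤ ∑ k ∈ Finset.range m, |f (z (k+1)) - f (z k) - P k| :=
          Finset.abs_sum_le_sum_abs _ _
      _ ≤ ∑ k ∈ Finset.range m, ε/(m+1) * ‖x - y‖ := Finset.sum_le_sum hterm
      _ = m * (ε/(m+1) * ‖x - y‖) := by
          rw [Finset.sum_const, Finset.card_range]; ring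
      _ ≤ ε * ‖x - y‖ := by
          have hm : (m : ℝ) / (m+1) ≤ 1 := by
            rw [div_le_one (by positivity)]; linarith
          have h0 : (0:ℝ) ≤ ‖x - y‖ := norm_nonneg _
          have h1 : (m:ℝ) * (ε/(m+1)) ≤ ε := by
            calc (m:ℝ) * (ε/(m+1)) = ε * ((m:ℝ)/(m+1)) := by ring
              _ ≤ ε * 1 := mul_le_mul_of_nonneg_left hm hε.le
              _ = ε := mul_one ε
          calc (m:ℝ) * (ε/(m+1) * ‖x - y‖) = (m:ℝ) * (ε/(m+1)) * ‖x - y‖ := by ring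
            _ ≤ ε * ‖x - y‖ := mul_le_mul_of_nonneg_right h1 h0
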